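/- For every countable ordinal α ≥ 1 there exists a continuous function f : (ω^α + 1) → (ω^α + 1) such that the Ellis semigroup E(ω^α + 1, f) is homeomorphic to the Cantor space 2^ℕ. Here ω^α + 1 denotes the ordinal interval Iic(ω^α) = {β : β ≤ ω^α} with the subspace topology inherited from the order topology on the ordinals. -/

import Mathlib

open Ordinal

namespace EllisCantor

/-! ### Binary digit sums -/

/-- Partial binary digit sum: `zb b k = ∑_{i<k} b i * 2^i`. -/
def zb (b : ℕ → Bool) (k : ℕ) : ℕ := ∑ i ∈ Finset.range k, if b i then 2 ^ i else 0

lemma zb_zero (b : ℕ → Bool) : zb b 0 = 0 := by simp [zb]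

lemma zb_succ (b : ℕ → Bool) (k : ℕ) :
    zb b (k + 1) = zb b k + (if b k then 2 ^ k else 0) := by
  simp [zb, Finset.sum_range_succ]

lemma zb_lt (b : ℕ → Bool) (k : ℕ) : zb b k < 2 ^ k := by
  induction k with
  | zero => simp [zb]
  | succ k ih =>
    rw [zb_succ, pow_succ]
    split <;> omega

lemma zb_mod {b : ℕ → Bool} {k j : ℕ} (h : k ≤ j) : zb b j % 2 ^ k = zb b k := by
  induction j with
  | zero =>
    have : k = 0 := Nat.le_zero.mp h
    simp [this, zb]
  | succ j ih =>
    rcases Nat.lt_or_ge k (j+1) with hk | hk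
    · have hk' : k ≤ j := Nat.lt_succ_iff.mp hk
      rw [zb_succ]
      have h2 : 2 ^ k ∣ (if b j then 2 ^ j else 0) := by
        split
        · exact pow_dvd_pow 2 hk'
        · exact dvd_zero _
      obtain ⟨c, hc⟩ := h2
      rw [hc, Nat.add_mul_mod_self_left, ih hk']
    · have : k = j + 1 := le_antisymm h hk
      subst this
      exact Nat.mod_eq_of_lt (zb_lt b (j+1))

lemma zb_testBit (n k : ℕ) : zb n.testBit k = n % 2 ^ k := by
  induction k with
  | zero => simp [zb, Nat.mod_one]
  | succ k ih =>
    have hm : n % 2 ^ (k+1) = n % 2 ^ k + 2 ^ k * (n / 2 ^ k % 2) := Nat.mod_pow_succ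
    rw [zb_succ, ih, hm]
    rcases Nat.testBit_eq_decide_div_mod_eq (x := n) (i := k) with h
    by_cases hb : n.testBit k
    · simp only [hb, if_true]
      have : n / 2 ^ k % 2 = 1 := by
        have := hb
        rwa [Nat.testBit_eq_decide_div_mod_eq, decide_eq_true_eq] at this
      rw [this]; ring
    · simp only [hb, if_false, Bool.false_eq_true]
      have : n / 2 ^ k % 2 = 0 := by
        have := hb
        rw [Nat.testBit_eq_decide_div_mod_eq, decide_eq_true_eq] at this
        omega
      rw [this]; ring

lemma zb_inj : Function.Injective zb := by
  intro b b' h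
  funext k
  have h1 := congrFun h (k + 1)
  have h2 := congrFun h k
  rw [zb_succ, zb_succ, h2] at h1
  have heq : (if b k then 2^k else 0) = (if b' k then 2^k else 0) := by omega
  have hp : 0 < 2^k := Nat.two_pow_pos k
  by_cases hb : b k <;> by_cases hb' : b' k <;> simp_all

lemma zb_continuous (k : ℕ) : Continuous fun b : ℕ → Bool => zb b k := by
  have : (fun b : ℕ → Bool => zb b k)
      = (fun v : Fin k → Bool => ∑ i ∈ Finset.range k, if h : i < k then (if v ⟨i, h⟩ then 2^i else 0) else 0)
        ∘ (fun b i => b i.1) := by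
    funext b
    simp only [Function.comp_apply, zb]
    refine Finset.sum_congr rfl fun i hi => ?_
    rw [dif_pos (Finset.mem_range.mp hi)]
  rw [this]
  exact (continuous_of_discreteTopology).comp (continuous_pi fun i => continuous_apply i.1)


/-! ### Block structures -/

/-- A block structure on an ordinal `o`: a strictly-spaced cofinal sequence `δ` below `o`,
leaving room for a block of `2^k` successor ordinals after `δ k`. -/
structure BS (o : Ordinal) where
  δ : ℕ → Ordinal
  lt : ∀ k, δ k < o
  step : ∀ k, δ k + ((2 ^ k : ℕ) : Ordinal) ≤ δ (k + 1)
  unbdd : ∀ β < o, ∃ k, β ≤ δ k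
  padd : ∀ x < o, ∀ n : ℕ, x + (n : Ordinal) < o

variable {o : Ordinal} (B : BS o)

/-- The `i`-th point of the `k`-th block. -/
def BS.bp (k i : ℕ) : Ordinal := B.δ k + ((i : Ordinal) + 1)

lemma BS.bp_eq_nat (k i : ℕ) : B.bp k i = B.δ k + ((i + 1 : ℕ) : Ordinal) := by
  simp [BS.bp]

lemma BS.step_le {k l : ℕ} (h : k < l) : B.δ k + ((2 ^ k : ℕ) : Ordinal) ≤ B.δ l := by
  induction l with
  | zero => omega
  | succ l ih =>
    rcases Nat.lt_or_ge k l with h' | h'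
    · exact (ih h').trans (le_self_add.trans (B.step l))
    · have : k = l := by omega
      subst this; exact B.step k

lemma BS.mono : StrictMono B.δ := by
  have h : ∀ k, B.δ k < B.δ (k + 1) := by
    intro k
    calc B.δ k < B.δ k + ((2 ^ k : ℕ) : Ordinal) := by
          exact lt_add_of_pos_right _ (by
            rw [← Nat.cast_zero, Nat.cast_lt]
            exact Nat.two_pow_pos k)
      _ ≤ B.δ (k + 1) := B.step k
  exact strictMono_nat_of_lt_succ h

lemma BS.bp_le_delta_succ {k i : ℕ} (hi : i < 2 ^ k) : B.bp k i ≤ B.δ (k + 1) := by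
  rw [B.bp_eq_nat]
  refine le_trans ?_ (B.step k)
  exact add_le_add le_rfl (by rw [Nat.cast_le]; omega)

lemma BS.bp_lt {k i : ℕ} (hi : i < 2 ^ k) : B.bp k i < o := by
  exact lt_of_le_of_lt (B.bp_le_delta_succ hi) (B.lt (k + 1))

lemma BS.bp_lt_of_blk_lt {k l i : ℕ} (hi : i < 2 ^ k) (h : k < l) : B.bp k i ≤ B.δ l :=
  (B.bp_le_delta_succ hi).trans (B.mono.monotone h)

lemma BS.delta_lt_bp (k i : ℕ) : B.δ k < B.bp k i := by
  rw [BS.bp, lt_add_iff_pos_right]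
  exact lt_of_lt_of_le zero_lt_one (le_add_self (a := 1) (b := (i : Ordinal)))

lemma BS.bp_uniq {k l i j : ℕ} (hi : i < 2 ^ k) (hj : j < 2 ^ l)
    (h : B.bp k i = B.bp l j) : k = l ∧ i = j := by
  have hkl : k = l := by
    by_contra hne
    rcases Nat.lt_or_ge k l with h' | h'
    · exact absurd h (ne_of_lt (lt_of_le_of_lt (B.bp_lt_of_blk_lt hi h') (B.delta_lt_bp l j)))
    · have h'' : l < k := by omega
      exact absurd h.symm (ne_of_lt (lt_of_le_of_lt (B.bp_lt_of_blk_lt hj h'') (B.delta_lt_bp k i)))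
  subst hkl
  refine ⟨rfl, ?_⟩
  rw [B.bp_eq_nat, B.bp_eq_nat] at h
  have := (add_right_inj (B.δ k)).mp h
  rwa [Nat.cast_inj, Nat.add_right_cancel_iff] at this

/-- `x` is a block point. -/
def BS.Blk (x : Ordinal) : Prop := ∃ p : ℕ × ℕ, p.2 < 2 ^ p.1 ∧ x = B.bp p.1 p.2

noncomputable def BS.pos {x : Ordinal} (h : B.Blk x) : ℕ × ℕ := h.choose

lemma BS.pos_lt {x : Ordinal} (h : B.Blk x) : (B.pos h).2 < 2 ^ (B.pos h).1 := h.choose_spec.1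

lemma BS.pos_eq {x : Ordinal} (h : B.Blk x) : x = B.bp (B.pos h).1 (B.pos h).2 := h.choose_spec.2

lemma BS.pos_bp {k i : ℕ} (hi : i < 2 ^ k) (h : B.Blk (B.bp k i)) : B.pos h = (k, i) := by
  have h1 := B.pos_lt h
  have h2 := B.pos_eq h
  obtain ⟨hk, hii⟩ := B.bp_uniq h1 hi h2.symm
  exact Prod.ext hk hii

lemma BS.blk_bp {k i : ℕ} (hi : i < 2 ^ k) : B.Blk (B.bp k i) := ⟨(k, i), hi, rfl⟩

lemma BS.not_blk_of_not_succ {x : Ordinal} (hx : ∀ y : Ordinal, x ≠ y + 1) : ¬ B.Blk x := by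
  rintro ⟨⟨k, i⟩, hi, rfl⟩
  exact hx (B.δ k + i) (by rw [BS.bp, add_assoc])

/-! ### The rotation maps -/

open Classical in
/-- Rotate block `k` by `v k`, fix everything else. -/
noncomputable def BS.rotV (v : ℕ → ℕ) (x : Ordinal) : Ordinal :=
  if h : B.Blk x then B.bp (B.pos h).1 (((B.pos h).2 + v (B.pos h).1) % 2 ^ (B.pos h).1) else x

lemma BS.rotV_bp (v : ℕ → ℕ) {k i : ℕ} (hi : i < 2 ^ k) :
    B.rotV v (B.bp k i) = B.bp k ((i + v k) % 2 ^ k) := by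
  rw [BS.rotV, dif_pos (B.blk_bp hi), B.pos_bp hi]

lemma BS.rotV_not {v : ℕ → ℕ} {x : Ordinal} (h : ¬ B.Blk x) : B.rotV v x = x := dif_neg h

lemma BS.rotV_le {v : ℕ → ℕ} {x : Ordinal} (hx : x ≤ o) : B.rotV v x ≤ o := by
  rw [BS.rotV]
  split
  · exact (B.bp_lt (Nat.mod_lt _ (Nat.two_pow_pos _))).le
  · exact hx

lemma BS.rotV_congr {v w : ℕ → ℕ} (h : ∀ k, v k % 2 ^ k = w k % 2 ^ k) :
    B.rotV v = B.rotV w := by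
  funext x
  rw [BS.rotV, BS.rotV]
  split
  · congr 1
    rw [Nat.add_mod, h, ← Nat.add_mod]
  · rfl

lemma BS.rotV_rotV (v w : ℕ → ℕ) (x : Ordinal) :
    B.rotV v (B.rotV w x) = B.rotV (fun k => v k + w k) x := by
  by_cases h : B.Blk x
  · obtain ⟨⟨k, i⟩, hi, rfl⟩ := h
    rw [B.rotV_bp w hi, B.rotV_bp v (Nat.mod_lt _ (Nat.two_pow_pos _)), B.rotV_bp _ hi]
    congr 1
    rw [Nat.mod_add_mod]
    congr 1
    omega
  · rw [B.rotV_not h, B.rotV_not h, B.rotV_not h]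


lemma continuousAt_of_eventually_const {X Y : Type*} [TopologicalSpace X] [TopologicalSpace Y]
    {f : X → Y} {z : X} (h : ∀ᶠ y in nhds z, f y = f z) : ContinuousAt f z :=
  Filter.Tendsto.congr' (by filter_upwards [h] with y hy using hy.symm) tendsto_const_nhds

include B

lemma BS.o_pos : 0 < o := lt_of_le_of_lt zero_le (B.lt 0)

lemma BS.succ_lt {x : Ordinal} (hx : x < o) : x + 1 < o := by
  have := B.padd x hx 1
  simpa using this

lemma BS.not_blk_limit {x : Ordinal} (hx : ¬ ∃ y, x = y + 1) : ¬ B.Blk x :=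
  B.not_blk_of_not_succ (by push_neg at hx; exact hx)

lemma BS.not_blk_top : ¬ B.Blk o := by
  rintro ⟨⟨k, i⟩, hi, h⟩
  exact absurd h.symm (ne_of_lt (B.bp_lt hi))

/-- The lift of `rotV` to the space `Iic o`. -/
noncomputable def BS.rotX (v : ℕ → ℕ) : Set.Iic o → Set.Iic o :=
  fun x => ⟨B.rotV v x.1, B.rotV_le x.2⟩

lemma BS.rotX_coe (v : ℕ → ℕ) (x : Set.Iic o) : (B.rotX v x : Ordinal) = B.rotV v x.1 := rfl

lemma BS.continuous_rotX (v : ℕ → ℕ) : Continuous (B.rotX v) := by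
  rw [continuous_iff_continuousAt]
  rintro ⟨x, hx⟩
  have hx' : x ≤ o := hx
  rcases eq_or_lt_of_le hx' with rfl | hxo
  · -- the top point
    have hfix : B.rotX v ⟨x, hx⟩ = ⟨x, hx⟩ := Subtype.ext (B.rotV_not B.not_blk_top)
    rw [ContinuousAt, hfix, tendsto_order]
    constructor
    · rintro ⟨b, hb⟩ hblt
      rw [Subtype.mk_lt_mk] at hblt
      obtain ⟨K, hK⟩ := B.unbdd b hblt
      have hmem : Set.Ioi (⟨B.δ K, (B.lt K).le⟩ : Set.Iic _) ∈ nhds (⟨x, hx⟩ : Set.Iic _) :=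
        isOpen_Ioi.mem_nhds (B.lt K)
      filter_upwards [hmem] with y hy
      have hy' : B.δ K < (y : Ordinal) := hy
      show (⟨b, hb⟩ : Set.Iic _) < B.rotX v y
      rw [← Subtype.coe_lt_coe, B.rotX_coe]
      by_cases hB : B.Blk y.1
      · obtain ⟨⟨k, i⟩, hi, hyeq⟩ := hB
        have hKk : K ≤ k := by
          by_contra hlt
          push_neg at hlt
          exact absurd (lt_of_lt_of_le (hyeq ▸ hy') (B.bp_lt_of_blk_lt hi hlt)) (lt_irrefl _)
        rw [hyeq, B.rotV_bp v hi]
        exact lt_of_le_of_lt (hK.trans (B.mono.monotone hKk)) (B.delta_lt_bp k _)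
      · rw [B.rotV_not hB]
        exact lt_of_le_of_lt hK hy'
    · rintro ⟨b, hb⟩ hblt
      rw [gt_iff_lt, Subtype.mk_lt_mk] at hblt
      exact absurd (lt_of_lt_of_le hblt hb) (lt_irrefl _)
  · -- x < o
    rcases Ordinal.zero_or_succ_or_isSuccLimit x with rfl | ⟨a, rfl⟩ | hlim
    · -- x = 0 : isolated
      apply continuousAt_of_eventually_const
      have h1 : (1 : Ordinal) ≤ o := by
        simpa [Ordinal.succ_zero] using Order.succ_le_of_lt hxo
      have hmem : Set.Iio (⟨1, h1⟩ : Set.Iic o) ∈ nhds (⟨0, hx⟩ : Set.Iic o) :=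
        isOpen_Iio.mem_nhds (by show (0 : Ordinal) < 1; exact zero_lt_one)
      filter_upwards [hmem] with y hy
      rw [Set.mem_Iio, ← Subtype.coe_lt_coe] at hy
      exact congrArg (B.rotX v) (Subtype.ext (Ordinal.lt_one_iff_zero.mp hy))
    · -- a successor : isolated
      apply continuousAt_of_eventually_const
      have hx1 : Order.succ a + 1 ≤ o := (B.succ_lt hxo).le
      have ha : a ≤ o := (lt_of_lt_of_le (Order.lt_succ a) hx').le
      have hmem : Set.Ioo (⟨a, ha⟩ : Set.Iic o) ⟨Order.succ a + 1, hx1⟩ ∈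
          nhds (⟨Order.succ a, hx⟩ : Set.Iic o) := by
        refine isOpen_Ioo.mem_nhds ?_
        constructor
        · exact Subtype.mk_lt_mk.mpr (Order.lt_succ a)
        · exact Subtype.mk_lt_mk.mpr (by rw [Ordinal.add_one_eq_succ]; exact Order.lt_succ _)
      filter_upwards [hmem] with y hy
      obtain ⟨hy1, hy2⟩ := hy
      rw [← Subtype.coe_lt_coe] at hy1 hy2
      have hy2a : (y : Ordinal) < Order.succ a + 1 := hy2
      have hy2' : (y : Ordinal) ≤ Order.succ a := by
        rwa [Ordinal.add_one_eq_succ, Order.lt_succ_iff] at hy2a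
      exact congrArg (B.rotX v) (Subtype.ext (le_antisymm hy2' (Order.succ_le_of_lt hy1)))
    · -- x a limit : rotV is the identity near x
      obtain ⟨K, hK⟩ := B.unbdd x hxo
      set F := (Finset.range K ×ˢ Finset.range (2 ^ K)) with hF
      set β := F.sup (fun p => if B.bp p.1 p.2 < x then B.bp p.1 p.2 else 0) with hβdef
      have hβ : β < x := by
        rw [hβdef]
        rw [Finset.sup_lt_iff (by simpa using hlim.pos)]
        intro p _
        split
        · assumption
        · simpa using hlim.pos
      have hnb : ∀ y : Ordinal, β < y → y ≤ x → ¬ B.Blk y := by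
        rintro y hy1 hy2 ⟨⟨k, i⟩, hi, rfl⟩
        have hsucc : B.bp k i = (B.δ k + i) + 1 := by rw [BS.bp, add_assoc]
        have hylt : B.bp k i < x := by
          rcases lt_or_eq_of_le hy2 with h | h
          · exact h
          · exfalso
            have hc : B.δ k + (i : Ordinal) < x := by
              rw [← h, hsucc]
              exact (Ordinal.add_one_eq_succ _) ▸ Order.lt_succ _
            have hcc := hlim.succ_lt hc
            rw [← Ordinal.add_one_eq_succ, ← hsucc, h] at hcc
            exact lt_irrefl _ hcc
        rcases Nat.lt_or_ge k K with hk | hk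
        · have hmemF : (k, i) ∈ F := by
            rw [hF, Finset.mem_product]
            exact ⟨Finset.mem_range.mpr hk,
              Finset.mem_range.mpr (lt_of_lt_of_le hi (Nat.pow_le_pow_right (by norm_num) hk.le))⟩
          have := Finset.le_sup (f := fun p : ℕ × ℕ => if B.bp p.1 p.2 < x then B.bp p.1 p.2 else 0)
            hmemF
          dsimp only at this
          rw [if_pos hylt] at this
          exact absurd (lt_of_lt_of_le hy1 (hβdef ▸ this)) (lt_irrefl _)
        · have hxk : x ≤ B.δ k := hK.trans (B.mono.monotone hk)
          exact (lt_of_le_of_lt hxk (B.delta_lt_bp k i)).asymm hylt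
      have hβo : β ≤ o := (hβ.trans hxo).le
      have hx1 : x + 1 ≤ o := (B.succ_lt hxo).le
      have hmem : Set.Ioo (⟨β, hβo⟩ : Set.Iic o) ⟨x + 1, hx1⟩ ∈
          nhds (⟨x, hx⟩ : Set.Iic o) := by
        refine isOpen_Ioo.mem_nhds ?_
        exact ⟨Subtype.mk_lt_mk.mpr hβ,
          Subtype.mk_lt_mk.mpr (by rw [Ordinal.add_one_eq_succ]; exact Order.lt_succ x)⟩
      refine ContinuousAt.congr continuousAt_id ?_
      filter_upwards [hmem] with y hy
      obtain ⟨hy1, hy2⟩ := hy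
      rw [← Subtype.coe_lt_coe] at hy1 hy2
      have hy2a : (y : Ordinal) < x + 1 := hy2
      have hy2' : (y : Ordinal) ≤ x := by
        rwa [Ordinal.add_one_eq_succ, Order.lt_succ_iff] at hy2a
      exact Subtype.ext (B.rotV_not (hnb y.1 hy1 hy2')) |>.symm


lemma BS.rotV_zero (x : Ordinal) : B.rotV (fun _ => 0) x = x := by
  by_cases h : B.Blk x
  · obtain ⟨⟨k, i⟩, hi, rfl⟩ := h
    rw [B.rotV_bp _ hi, Nat.add_zero, Nat.mod_eq_of_lt hi]
  · exact B.rotV_not h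

lemma BS.rotX_iterate (n : ℕ) : (B.rotX fun _ => 1)^[n] = B.rotX fun _ => n := by
  induction n with
  | zero =>
    funext x
    rw [Function.iterate_zero, id_eq]
    exact (Subtype.ext (B.rotV_zero x.1)).symm
  | succ n ih =>
    funext x
    rw [Function.iterate_succ_apply', ih]
    refine Subtype.ext ?_
    rw [B.rotX_coe, B.rotX_coe, B.rotX_coe, B.rotV_rotV]
    have : (fun k => 1 + n) = (fun _ : ℕ => n + 1) := by funext k; omega
    rw [this]

/-- The candidate homeomorphism from the Cantor set to the Ellis semigroup. -/
noncomputable def BS.phi (b : ℕ → Bool) : Set.Iic o → Set.Iic o := B.rotX (zb b)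

lemma BS.iterate_eq_phi (n : ℕ) : (B.rotX fun _ => 1)^[n] = B.phi n.testBit := by
  rw [B.rotX_iterate, BS.phi]
  have hcong := B.rotV_congr (v := fun _ => n) (w := zb n.testBit) (fun k => by
    rw [zb_testBit, Nat.mod_mod_of_dvd n dvd_rfl])
  funext x
  exact Subtype.ext (congrFun hcong x.1)

lemma BS.continuous_phi : Continuous (fun b : ℕ → Bool => B.phi b) := by
  refine continuous_pi fun x => ?_
  by_cases h : B.Blk x.1
  · obtain ⟨⟨k, i⟩, hi, hx⟩ := h
    change i < 2 ^ k at hi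
    change (x : Ordinal) = B.bp k i at hx
    have key : (fun b : ℕ → Bool => B.phi b x) =
        (fun m : ℕ => (⟨B.bp k ((i + m) % 2 ^ k), (B.bp_lt (Nat.mod_lt _ (Nat.two_pow_pos _))).le⟩ :
          Set.Iic o)) ∘ (fun b => zb b k) := by
      funext b
      refine Subtype.ext ?_
      show B.rotV (zb b) x.1 = _
      rw [hx, B.rotV_bp _ hi]
      rfl
    rw [key]
    exact (continuous_of_discreteTopology).comp (zb_continuous k)
  · have key : (fun b : ℕ → Bool => B.phi b x) = fun _ => x := by
      funext b
      exact Subtype.ext (B.rotV_not h)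
    rw [key]
    exact continuous_const

lemma BS.phi_injective : Function.Injective (fun b : ℕ → Bool => B.phi b) := by
  intro b b' h
  apply zb_inj
  funext k
  cases k with
  | zero => rw [zb_zero, zb_zero]
  | succ k =>
    have h0 : (0 : ℕ) < 2 ^ (k + 1) := Nat.two_pow_pos _
    have hpt := congrFun h ⟨B.bp (k + 1) 0, (B.bp_lt h0).le⟩
    have hval : B.bp (k + 1) ((0 + zb b (k + 1)) % 2 ^ (k + 1)) =
        B.bp (k + 1) ((0 + zb b' (k + 1)) % 2 ^ (k + 1)) := by
      have h1 : (B.phi b ⟨B.bp (k + 1) 0, (B.bp_lt h0).le⟩ : Ordinal) =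
          B.bp (k + 1) ((0 + zb b (k + 1)) % 2 ^ (k + 1)) := by
        show B.rotV (zb b) (B.bp (k + 1) 0) = _
        rw [B.rotV_bp _ h0]
      have h2 : (B.phi b' ⟨B.bp (k + 1) 0, (B.bp_lt h0).le⟩ : Ordinal) =
          B.bp (k + 1) ((0 + zb b' (k + 1)) % 2 ^ (k + 1)) := by
        show B.rotV (zb b') (B.bp (k + 1) 0) = _
        rw [B.rotV_bp _ h0]
      rw [← h1, ← h2]
      exact congrArg Subtype.val hpt
    have := (B.bp_uniq (Nat.mod_lt _ h0) (Nat.mod_lt _ h0) hval).2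
    rwa [Nat.zero_add, Nat.zero_add, Nat.mod_eq_of_lt (zb_lt _ _),
      Nat.mod_eq_of_lt (zb_lt _ _)] at this

lemma BS.tendsto_phi (b : ℕ → Bool) :
    Filter.Tendsto (fun j => (B.rotX fun _ => 1)^[zb b j]) Filter.atTop
      (nhds (B.phi b)) := by
  rw [tendsto_pi_nhds]
  intro x
  by_cases h : B.Blk x.1
  · obtain ⟨⟨k, i⟩, hi, hx⟩ := h
    change i < 2 ^ k at hi
    change (x : Ordinal) = B.bp k i at hx
    refine Filter.Tendsto.congr' ?_ tendsto_const_nhds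
    rw [Filter.EventuallyEq, Filter.eventually_atTop]
    refine ⟨k, fun j hj => ?_⟩
    refine Subtype.ext ?_
    rw [B.rotX_iterate]
    show (B.phi b x : Ordinal) = B.rotV (fun _ => zb b j) x.1
    show B.rotV (zb b) x.1 = _
    rw [hx, B.rotV_bp _ hi, B.rotV_bp _ hi]
    congr 1
    rw [Nat.add_mod i (zb b k), Nat.add_mod i (zb b j), zb_mod hj, zb_mod (le_refl k)]
  · refine Filter.Tendsto.congr' ?_ tendsto_const_nhds
    rw [Filter.EventuallyEq, Filter.eventually_atTop]
    refine ⟨0, fun j _ => ?_⟩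
    refine Subtype.ext ?_
    rw [B.rotX_iterate]
    show (B.phi b x : Ordinal) = B.rotV (fun _ => zb b j) x.1
    show B.rotV (zb b) x.1 = _
    rw [B.rotV_not h, B.rotV_not h]

lemma BS.closure_eq :
    closure {g : Set.Iic o → Set.Iic o | ∃ n : ℕ, g = (B.rotX fun _ => 1)^[n]} =
      Set.range (fun b : ℕ → Bool => B.phi b) := by
  apply subset_antisymm
  · refine closure_minimal ?_ (isCompact_range B.continuous_phi).isClosed
    rintro g ⟨n, rfl⟩
    exact ⟨n.testBit, (B.iterate_eq_phi n).symm⟩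
  · rintro _ ⟨b, rfl⟩
    refine mem_closure_of_tendsto (B.tendsto_phi b) ?_
    filter_upwards with j
    exact ⟨zb b j, rfl⟩


omit B

/-- `ω ^ α` is countable when `α` is. -/
lemma card_opow_omega0_le {α : Ordinal} (h : α.card ≤ Cardinal.aleph0) :
    (ω ^ α).card ≤ Cardinal.aleph0 := by
  induction α using Ordinal.induction with
  | h α IH =>
    rcases Ordinal.zero_or_succ_or_isSuccLimit α with rfl | ⟨β, rfl⟩ | hl
    · rw [opow_zero]
      simpa using le_of_lt Cardinal.one_lt_aleph0
    · rw [opow_succ, Ordinal.card_mul, Ordinal.card_omega0]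
      have hβ : β.card ≤ Cardinal.aleph0 :=
        le_trans (Ordinal.card_le_card (le_of_lt (Order.lt_succ β))) h
      calc (ω ^ β).card * Cardinal.aleph0
          ≤ Cardinal.aleph0 * Cardinal.aleph0 :=
            mul_le_mul' (IH β (Order.lt_succ β) hβ) le_rfl
        _ = Cardinal.aleph0 := Cardinal.aleph0_mul_aleph0
    · have hlt : ω ^ α < (Cardinal.aleph 1).ord := by
        rw [opow_limit omega0_ne_zero hl]
        refine (iSup_Iio_eq_bsup (o := α) (f := fun a _ => ω ^ a)).trans_lt ?_
        apply Cardinal.bsup_lt_ord_of_isRegular Cardinal.isRegular_aleph_one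
        · exact lt_of_le_of_lt h Cardinal.aleph0_lt_aleph_one
        · intro b hb
          rw [Cardinal.lt_ord]
          refine lt_of_le_of_lt (IH b hb ?_) Cardinal.aleph0_lt_aleph_one
          exact le_trans (Ordinal.card_le_card hb.le) h
      rw [Cardinal.lt_ord] at hlt
      have := Cardinal.succ_aleph0 ▸ hlt
      exact Order.lt_succ_iff.mp this

/-- Existence of a block structure on a countable additively-principal limit ordinal. -/
lemma exists_BS {o : Ordinal} (hcard : o.card ≤ Cardinal.aleph0) (hω : ω ≤ o)
    (hprin : Ordinal.Principal (· + ·) o) : Nonempty (BS o) := by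
  have ho : 0 < o := lt_of_lt_of_le omega0_pos hω
  have padd : ∀ x < o, ∀ n : ℕ, x + (n : Ordinal) < o := by
    intro x hx n
    rcases Nat.eq_zero_or_pos n with rfl | hn
    · simpa using hx
    · exact hprin hx (lt_of_lt_of_le (nat_lt_omega0 n) hω)
  have hctble : (Set.Iio o).Countable := by
    rw [← Set.countable_coe_iff, ← Cardinal.mk_le_aleph0_iff, Ordinal.mk_Iio_ordinal]
    exact Cardinal.lift_le_aleph0.mpr hcard
  obtain ⟨e, he⟩ := hctble.exists_eq_range ⟨0, ho⟩
  have he_lt : ∀ k, e k < o := by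
    intro k
    have : e k ∈ Set.Iio o := he ▸ Set.mem_range_self k
    exact this
  set δ : ℕ → Ordinal := fun k =>
    Nat.rec (e 0) (fun k d => max (e (k + 1)) (d + ((2 ^ (k + 1) : ℕ) : Ordinal))) k with hδ
  have hδ0 : δ 0 = e 0 := rfl
  have hδs : ∀ k, δ (k + 1) = max (e (k + 1)) (δ k + ((2 ^ (k + 1) : ℕ) : Ordinal)) :=
    fun k => rfl
  have hlt : ∀ k, δ k < o := by
    intro k
    induction k with
    | zero => rw [hδ0]; exact he_lt 0
    | succ k ih =>
      rw [hδs]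
      exact max_lt (he_lt (k + 1)) (padd _ ih _)
  have hstep : ∀ k, δ k + ((2 ^ k : ℕ) : Ordinal) ≤ δ (k + 1) := by
    intro k
    rw [hδs]
    refine le_trans ?_ (le_max_right _ _)
    exact add_le_add le_rfl (by rw [Nat.cast_le]; exact Nat.pow_le_pow_right (by norm_num) k.le_succ)
  have hunbdd : ∀ β < o, ∃ k, β ≤ δ k := by
    intro β hβ
    have : β ∈ Set.range e := he ▸ hβ
    obtain ⟨k, rfl⟩ := this
    refine ⟨k, ?_⟩
    cases k with
    | zero => rw [hδ0]
    | succ k => rw [hδs]; exact le_max_left _ _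
  exact ⟨⟨δ, hlt, hstep, hunbdd, padd⟩⟩

end EllisCantor

open Ordinal in
/-- Corollary 2.8: For every countable ordinal `α ≥ 1` there is a continuous function
`f : ω^α + 1 → ω^α + 1` (where `ω^α + 1` is realized as `Iic (ω^α)` with the subspace
topology from the order topology on ordinals) whose Ellis semigroup is homeomorphic
to the Cantor space `2^ℕ`. -/
theorem exists_fun_ellis_homeomorphic_cantor (α : Ordinal) (hα : 1 ≤ α)
    (hcount : α.card ≤ Cardinal.aleph0) :
    ∃ f : Set.Iic (omega0 ^ α) → Set.Iic (omega0 ^ α), Continuous f ∧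
      Nonempty ((closure {g : Set.Iic (omega0 ^ α) → Set.Iic (omega0 ^ α) |
        ∃ n : ℕ, g = f^[n]} : Set _) ≃ₜ (ℕ → Bool)) := by
  classical
  have hω : ω ≤ ω ^ α := by
    simpa using opow_le_opow_right omega0_pos hα
  obtain ⟨B⟩ := EllisCantor.exists_BS (o := ω ^ α)
    (EllisCantor.card_opow_omega0_le hcount) hω (principal_add_omega0_opow α)
  refine ⟨B.rotX fun _ => 1, B.continuous_rotX _, ?_⟩
  have hcl := B.closure_eq
  set S := {g : Set.Iic (ω ^ α) → Set.Iic (ω ^ α) | ∃ n : ℕ, g = (B.rotX fun _ => 1)^[n]}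
  have hmem : ∀ b : ℕ → Bool, B.phi b ∈ closure S := by
    intro b
    rw [hcl]
    exact ⟨b, rfl⟩
  let E : (ℕ → Bool) ≃ (closure S : Set _) :=
    Equiv.ofBijective (fun b => ⟨B.phi b, hmem b⟩) (by
      constructor
      · intro b b' h
        exact B.phi_injective (congrArg Subtype.val h)
      · rintro ⟨g, hg⟩
        rw [hcl] at hg
        obtain ⟨b, hb⟩ := hg
        exact ⟨b, Subtype.ext hb⟩)
  have hEcont : Continuous (E : (ℕ → Bool) → (closure S : Set _)) :=
    Continuous.subtype_mk B.continuous_phi _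
  exact ⟨(Continuous.homeoOfEquivCompactToT2 (f := E) hEcont).symm⟩
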